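/- The rational solution q_r(x,t) = 2iη ν₂₁* exp(2iη²x - i(2η²)^{2ε-1}t) / (ν₁₁* (4iη⁴x + i(2η²)^{2ε}t + η²)) is the pointwise limit as ξ → 0⁺ of the one-soliton solution q^{[1]}(x,t) (with |ν₁₁| = |ν₂₁|), for each fixed (x,t) where the denominator is nonzero. -/

import Mathlib

open Complex Real Filter Topology

lemma aux_frac (ν2 ν1 E z zb s D ξ η : ℂ) (hz : z ≠ 0) (hzb : zb ≠ 0) (hν1 : ν1 ≠ 0)
    (hs : s ≠ 0) (hξ : ξ ≠ 0) (hD : D ≠ 0) :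
    2 * Complex.I * ξ * η * ν2 / (z ^ 2 * zb * ν1) * (E * (z / s)) * (2 * s / D)
      = 4 * Complex.I * η * ν2 * E / (z * zb * ν1 * (D / ξ)) := by
  rw [eq_div_iff (mul_ne_zero (mul_ne_zero (mul_ne_zero hz hzb) hν1) (div_ne_zero hD hξ))]
  field_simp
  ring

lemma key_id (eta eps x t : ℝ) (heta : 0 < eta) (nu11 nu21 : ℂ) (hnu11 : nu11 ≠ 0)
    (hnu21 : nu21 ≠ 0) (hmod : ‖nu11‖ = ‖nu21‖) (xi : ℝ) (hxi : 0 < xi) :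
    (2 * I * (xi : ℂ) * (eta : ℂ) * starRingEnd ℂ nu21) /
            (((xi : ℂ) + I * eta) ^ 2 * ((xi : ℂ) - I * eta) * starRingEnd ℂ nu11) *
          Complex.exp (2 * I *
              ((-(xi ^ 2 - eta ^ 2) * x +
                (4 : ℝ) ^ (eps - 1) * (xi ^ 2 - eta ^ 2) *
                  (xi ^ 2 + eta ^ 2) ^ (2 * eps - 2) * t : ℝ) : ℂ) +
            Complex.log (((xi : ℂ) + I * eta) * (‖nu11‖ : ℝ) /
              ((Real.sqrt (xi ^ 2 + eta ^ 2) : ℝ) * (‖nu21‖ : ℝ)))) *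
          (Complex.cosh
            (2 * ((2 * xi * eta * x +
                (2 : ℝ) ^ (2 * eps - 1) * xi * eta *
                  (xi ^ 2 + eta ^ 2) ^ (2 * eps - 2) * t : ℝ) : ℂ) +
              Complex.log (((xi : ℂ) + I * eta) * (‖nu11‖ : ℝ) /
                ((Real.sqrt (xi ^ 2 + eta ^ 2) : ℝ) * (‖nu21‖ : ℝ)))))⁻¹
    = (4 * I * (eta : ℂ) * starRingEnd ℂ nu21 *
        Complex.exp (2 * I *
              ((-(xi ^ 2 - eta ^ 2) * x +
                (4 : ℝ) ^ (eps - 1) * (xi ^ 2 - eta ^ 2) *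
                  (xi ^ 2 + eta ^ 2) ^ (2 * eps - 2) * t : ℝ) : ℂ))) /
      (((xi ^ 2 + eta ^ 2 : ℝ) : ℂ) * starRingEnd ℂ nu11 *
        (2 * ((Real.cosh (2 * (2 * xi * eta * x +
                (2 : ℝ) ^ (2 * eps - 1) * xi * eta *
                  (xi ^ 2 + eta ^ 2) ^ (2 * eps - 2) * t)) : ℝ) : ℂ) +
          2 * I * (eta : ℂ) * ((Real.sinh (2 * (2 * xi * eta * x +
                (2 : ℝ) ^ (2 * eps - 1) * xi * eta *
                  (xi ^ 2 + eta ^ 2) ^ (2 * eps - 2) * t)) / xi : ℝ) : ℂ))) := by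
  have hx2 : (0:ℝ) < xi ^ 2 + eta ^ 2 := by positivity
  have hxiC : (xi : ℂ) ≠ 0 := by exact_mod_cast hxi.ne'
  set s : ℝ := Real.sqrt (xi ^ 2 + eta ^ 2) with hs
  have hs0 : 0 < s := Real.sqrt_pos.mpr hx2
  have hsC : (s : ℂ) ≠ 0 := by exact_mod_cast hs0.ne'
  have hs2 : ((s : ℂ)) ^ 2 = ((xi ^ 2 + eta ^ 2 : ℝ) : ℂ) := by
    rw [← Complex.ofReal_pow, Real.sq_sqrt hx2.le]
  set z : ℂ := (xi : ℂ) + I * eta with hzdef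
  set zb : ℂ := (xi : ℂ) - I * eta with hzbdef
  have hz : z ≠ 0 := by
    intro h
    have : z.im = 0 := by rw [h]; simp
    simp [hzdef] at this
    exact heta.ne' this
  have hzb : zb ≠ 0 := by
    intro h
    have : zb.im = 0 := by rw [h]; simp
    simp [hzbdef] at this
    exact heta.ne' this
  have hzzb : z * zb = ((xi ^ 2 + eta ^ 2 : ℝ) : ℂ) := by
    rw [hzdef, hzbdef]; push_cast
    linear_combination (-(eta:ℂ)^2) * Complex.I_sq
  have hr : ((‖nu21‖ : ℝ) : ℂ) ≠ 0 := by
    simpa using (norm_ne_zero_iff.mpr hnu21)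
  have hwsimp : z * (‖nu11‖ : ℝ) / ((s : ℝ) * (‖nu21‖ : ℝ)) = z / s := by
    push_cast [hmod]
    rw [mul_div_mul_right _ _ hr]
  rw [hwsimp]
  have hw0 : z / (s:ℂ) ≠ 0 := div_ne_zero hz hsC
  set Ar : ℝ := 2 * (2 * xi * eta * x +
      (2 : ℝ) ^ (2 * eps - 1) * xi * eta * (xi ^ 2 + eta ^ 2) ^ (2 * eps - 2) * t) with hAr
  set Tr : ℝ := -(xi ^ 2 - eta ^ 2) * x +
      (4 : ℝ) ^ (eps - 1) * (xi ^ 2 - eta ^ 2) * (xi ^ 2 + eta ^ 2) ^ (2 * eps - 2) * t with hTr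
  set u : ℂ := Complex.exp ((Ar : ℝ) : ℂ) with hu
  have hu0 : u ≠ 0 := Complex.exp_ne_zero _
  have hcoshC : Complex.cosh (2 * ((2 * xi * eta * x +
      (2 : ℝ) ^ (2 * eps - 1) * xi * eta * (xi ^ 2 + eta ^ 2) ^ (2 * eps - 2) * t : ℝ) : ℂ) +
      Complex.log (z / s)) = (u * z + u⁻¹ * zb) / (2 * s) := by
    have h1 : (2 : ℂ) * ((2 * xi * eta * x +
        (2 : ℝ) ^ (2 * eps - 1) * xi * eta * (xi ^ 2 + eta ^ 2) ^ (2 * eps - 2) * t : ℝ) : ℂ)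
        = ((Ar : ℝ) : ℂ) := by rw [hAr]; push_cast; ring
    rw [h1]
    have h2 : Complex.cosh (((Ar : ℝ) : ℂ) + Complex.log (z / s))
        = (Complex.exp (((Ar : ℝ) : ℂ) + Complex.log (z / s))
          + Complex.exp (-(((Ar : ℝ) : ℂ) + Complex.log (z / s)))) / 2 := rfl
    rw [h2, Complex.exp_neg, Complex.exp_add, Complex.exp_log hw0, ← hu]
    have hden : u * (z / s) ≠ 0 := mul_ne_zero hu0 hw0
    have hs2' : ((s:ℂ))^2 = (xi:ℂ)^2 + (eta:ℂ)^2 := by push_cast at hs2 ⊢; exact hs2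
    field_simp
    linear_combination hs2' + ((eta:ℂ)^2) * Complex.I_sq
  have hMrw : (2 * ((Real.cosh Ar : ℝ) : ℂ) + 2 * I * (eta : ℂ) * ((Real.sinh Ar / xi : ℝ) : ℂ))
      = (u * z + u⁻¹ * zb) / xi := by
    rw [Real.cosh_eq, Real.sinh_eq, hzdef, hzbdef, hu]
    push_cast
    rw [← Complex.exp_neg]
    field_simp
    ring
  rw [hcoshC, Complex.exp_add, Complex.exp_log hw0, hMrw]
  have hc11 : starRingEnd ℂ nu11 ≠ 0 := by simpa using hnu11
  clear_value z zb u s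
  rcases eq_or_ne (u * z + u⁻¹ * zb) 0 with hD | hD
  · simp [hD]
  · have hzzb' : z * zb = (xi:ℂ)^2 + (eta:ℂ)^2 := by push_cast at hzzb ⊢; exact hzzb
    rw [inv_div, ← hzzb]
    obtain ⟨Dv, hDv⟩ : ∃ Dv, u * z + u⁻¹ * zb = Dv := ⟨_, rfl⟩
    rw [hDv] at hD ⊢
    exact aux_frac _ _ _ z zb s Dv xi eta hz hzb hc11 hsC hxiC hD

/-- The fractional rational solution is the pointwise limit as `ξ → 0⁺` of the
fractional one-soliton solution (with `|ν₁₁| = |ν₂₁|`). -/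
theorem rational_limit_of_one_soliton (eta eps : ℝ) (heta : 0 < eta)
    (heps : eps ∈ Set.Ico (0 : ℝ) 1) (nu11 nu21 : ℂ) (hnu11 : nu11 ≠ 0)
    (hnu21 : nu21 ≠ 0) (hmod : ‖nu11‖ = ‖nu21‖) (x t : ℝ)
    (hden : (4 * I * (eta ^ 4 : ℝ) * (x : ℂ) +
        I * (((2 * eta ^ 2) ^ (2 * eps) : ℝ) : ℂ) * (t : ℂ) + (eta ^ 2 : ℝ)) ≠ 0) :
    Tendsto (fun xi : ℝ =>
        (2 * I * (xi : ℂ) * (eta : ℂ) * starRingEnd ℂ nu21) /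
            (((xi : ℂ) + I * eta) ^ 2 * ((xi : ℂ) - I * eta) * starRingEnd ℂ nu11) *
          Complex.exp (2 * I *
              ((-(xi ^ 2 - eta ^ 2) * x +
                (4 : ℝ) ^ (eps - 1) * (xi ^ 2 - eta ^ 2) *
                  (xi ^ 2 + eta ^ 2) ^ (2 * eps - 2) * t : ℝ) : ℂ) +
            Complex.log (((xi : ℂ) + I * eta) * (‖nu11‖ : ℝ) /
              ((Real.sqrt (xi ^ 2 + eta ^ 2) : ℝ) * (‖nu21‖ : ℝ)))) *
          (Complex.cosh
            (2 * ((2 * xi * eta * x +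
                (2 : ℝ) ^ (2 * eps - 1) * xi * eta *
                  (xi ^ 2 + eta ^ 2) ^ (2 * eps - 2) * t : ℝ) : ℂ) +
              Complex.log (((xi : ℂ) + I * eta) * (‖nu11‖ : ℝ) /
                ((Real.sqrt (xi ^ 2 + eta ^ 2) : ℝ) * (‖nu21‖ : ℝ)))))⁻¹)
      (nhdsWithin 0 (Set.Ioi 0))
      (nhds (2 * I * (eta : ℂ) * starRingEnd ℂ nu21 *
          Complex.exp (2 * I * (eta ^ 2 : ℝ) * (x : ℂ) -
            I * (((2 * eta ^ 2) ^ (2 * eps - 1) : ℝ) : ℂ) * (t : ℂ)) /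
        (starRingEnd ℂ nu11 *
          (4 * I * (eta ^ 4 : ℝ) * (x : ℂ) +
            I * (((2 * eta ^ 2) ^ (2 * eps) : ℝ) : ℂ) * (t : ℂ) + (eta ^ 2 : ℝ))))) := by
  have hη2 : (0:ℝ) < eta ^ 2 := by positivity
  -- the rpow factor
  have hRc : ContinuousAt (fun ξ : ℝ => (ξ ^ 2 + eta ^ 2) ^ (2 * eps - 2)) 0 := by
    have h2 : ContinuousAt (fun ξ : ℝ => ξ ^ 2 + eta ^ 2) 0 := by fun_prop
    exact h2.rpow_const (Or.inl (by simp; positivity))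
  have hRd : DifferentiableAt ℝ (fun ξ : ℝ => (ξ ^ 2 + eta ^ 2) ^ (2 * eps - 2)) 0 := by
    refine DifferentiableAt.rpow_const (by fun_prop) (Or.inl ?_)
    simp; positivity
  set φ : ℝ → ℝ := fun ξ =>
    4 * eta * x + 2 * (2:ℝ) ^ (2 * eps - 1) * eta * ((ξ ^ 2 + eta ^ 2) ^ (2 * eps - 2)) * t
    with hφ
  have hφc : ContinuousAt φ 0 := by
    apply ContinuousAt.add continuousAt_const
    exact (hRc.const_mul _).mul continuousAt_const
  have hφd : DifferentiableAt ℝ φ 0 := by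
    apply DifferentiableAt.add (differentiableAt_const _)
    exact (hRd.const_mul _).mul_const _
  -- derivative of sinh(ξ * φ ξ) at 0
  have hA : HasDerivAt (fun ξ : ℝ => ξ * φ ξ) (φ 0) 0 := by
    have h := (hasDerivAt_id (0:ℝ)).mul hφd.hasDerivAt
    exact h.congr_deriv (by simp)
  have hG : HasDerivAt (fun ξ : ℝ => Real.sinh (ξ * φ ξ)) (φ 0) 0 := by
    have h := (Real.hasDerivAt_sinh ((0:ℝ) * φ 0)).comp 0 hA
    exact h.congr_deriv (by simp)
  have hsub : 𝓝[>] (0:ℝ) ≤ 𝓝[≠] (0:ℝ) :=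
    nhdsWithin_mono _ (fun y hy => ne_of_gt hy)
  have hslope : Tendsto (fun ξ : ℝ => Real.sinh (ξ * φ ξ) / ξ) (𝓝[>] 0) (𝓝 (φ 0)) := by
    have h := (hasDerivAt_iff_tendsto_slope.mp hG).mono_left hsub
    refine h.congr fun ξ => ?_
    simp [slope_def_field]
  -- notation
  set c : ℝ := ((0:ℝ) ^ 2 + eta ^ 2) ^ (2 * eps - 2) with hc
  have hzero : ((0:ℝ) ^ 2 + eta ^ 2) = eta ^ 2 := by norm_num
  have hc' : c = (eta ^ 2) ^ (2 * eps - 2) := by rw [hc, hzero]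
  -- real power identities
  have e1 : (2:ℝ) ^ (2 * eps) = 2 ^ (2 * eps - 1) * 2 := by
    have h := Real.rpow_add_one (two_ne_zero) (2 * eps - 1)
    rwa [show 2 * eps - 1 + 1 = 2 * eps by ring] at h
  have e2 : (eta ^ 2) ^ (2 * eps) = (eta ^ 2) ^ (2 * eps - 2) * eta ^ 4 := by
    have h := Real.rpow_add hη2 (2 * eps - 2) 2
    rw [show 2 * eps - 2 + 2 = 2 * eps by ring] at h
    rw [h, show ((2:ℝ)) = ((2:ℕ):ℝ) by norm_num, Real.rpow_natCast]
    ring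
  have hP1 : ((2 * eta ^ 2) ^ (2 * eps) : ℝ)
      = 2 * (2:ℝ) ^ (2 * eps - 1) * (eta ^ 2) ^ (2 * eps - 2) * eta ^ 4 := by
    rw [Real.mul_rpow (by norm_num) hη2.le, e1, e2]; ring
  have e3 : (4:ℝ) ^ (eps - 1) = 2 ^ (2 * eps - 2) := by
    rw [show (4:ℝ) = 2 ^ ((2:ℕ):ℝ) by rw [Real.rpow_natCast]; norm_num,
      ← Real.rpow_mul (by norm_num)]
    norm_num
    ring_nf
  have e4 : (2:ℝ) ^ (2 * eps - 1) = 2 * 2 ^ (2 * eps - 2) := by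
    have h := Real.rpow_add_one (two_ne_zero) (2 * eps - 2)
    rw [show 2 * eps - 2 + 1 = 2 * eps - 1 by ring] at h
    rw [h]; ring
  have e5 : (eta ^ 2) ^ (2 * eps - 1) = (eta ^ 2) ^ (2 * eps - 2) * eta ^ 2 := by
    have h := Real.rpow_add_one (ne_of_gt hη2) (2 * eps - 2)
    rwa [show 2 * eps - 2 + 1 = 2 * eps - 1 by ring] at h
  have hP2 : ((2 * eta ^ 2) ^ (2 * eps - 1) : ℝ)
      = 2 * (4:ℝ) ^ (eps - 1) * eta ^ 2 * (eta ^ 2) ^ (2 * eps - 2) := by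
    rw [Real.mul_rpow (by norm_num) hη2.le, e4, e5, e3]; ring
  -- limit of the numerator
  set Nf : ℝ → ℂ := fun xi => 4 * I * (eta : ℂ) * starRingEnd ℂ nu21 *
      Complex.exp (2 * I *
        ((-(xi ^ 2 - eta ^ 2) * x + (4 : ℝ) ^ (eps - 1) * (xi ^ 2 - eta ^ 2) *
            (xi ^ 2 + eta ^ 2) ^ (2 * eps - 2) * t : ℝ) : ℂ)) with hNf
  set Mf : ℝ → ℂ := fun xi => ((xi ^ 2 + eta ^ 2 : ℝ) : ℂ) * starRingEnd ℂ nu11 *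
      (2 * ((Real.cosh (2 * (2 * xi * eta * x +
              (2 : ℝ) ^ (2 * eps - 1) * xi * eta *
                (xi ^ 2 + eta ^ 2) ^ (2 * eps - 2) * t)) : ℝ) : ℂ) +
        2 * I * (eta : ℂ) * ((Real.sinh (2 * (2 * xi * eta * x +
              (2 : ℝ) ^ (2 * eps - 1) * xi * eta *
                (xi ^ 2 + eta ^ 2) ^ (2 * eps - 2) * t)) / xi : ℝ) : ℂ)) with hMf
  have hNlim : Tendsto Nf (𝓝[>] 0) (𝓝 (Nf 0)) := by
    have hθc : ContinuousAt (fun ξ : ℝ => -(ξ ^ 2 - eta ^ 2) * x +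
        (4:ℝ) ^ (eps - 1) * (ξ ^ 2 - eta ^ 2) * (ξ ^ 2 + eta ^ 2) ^ (2 * eps - 2) * t) 0 := by
      apply ContinuousAt.add (by fun_prop)
      exact ((ContinuousAt.mul (by fun_prop) hRc).mul continuousAt_const)
    have : ContinuousAt Nf 0 := by
      apply continuousAt_const.mul
      exact Complex.continuous_exp.continuousAt.comp
        (continuousAt_const.mul (Complex.continuous_ofReal.continuousAt.comp hθc))
    exact this.continuousWithinAt
  have hAφ : ∀ ξ : ℝ, 2 * (2 * ξ * eta * x +
      (2:ℝ) ^ (2 * eps - 1) * ξ * eta * (ξ ^ 2 + eta ^ 2) ^ (2 * eps - 2) * t) = ξ * φ ξ := by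
    intro ξ; rw [hφ]; ring
  have hAc : ContinuousAt (fun ξ : ℝ => ξ * φ ξ) 0 := continuousAt_id.mul hφc
  have hcoshA : Tendsto (fun ξ : ℝ => Real.cosh (2 * (2 * ξ * eta * x +
      (2:ℝ) ^ (2 * eps - 1) * ξ * eta * (ξ ^ 2 + eta ^ 2) ^ (2 * eps - 2) * t)))
      (𝓝[>] 0) (𝓝 1) := by
    have h : ContinuousAt (fun ξ : ℝ => Real.cosh (ξ * φ ξ)) 0 :=
      Real.continuous_cosh.continuousAt.comp hAc
    have h2 := h.tendsto.mono_left (nhdsWithin_le_nhds : 𝓝[>] (0:ℝ) ≤ 𝓝 0)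
    simp only [zero_mul, Real.cosh_zero] at h2
    refine Tendsto.congr (fun ξ => ?_) h2
    rw [hAφ ξ]
  have hsinhA : Tendsto (fun ξ : ℝ => Real.sinh (2 * (2 * ξ * eta * x +
      (2:ℝ) ^ (2 * eps - 1) * ξ * eta * (ξ ^ 2 + eta ^ 2) ^ (2 * eps - 2) * t)) / ξ)
      (𝓝[>] 0) (𝓝 (φ 0)) := by
    refine Tendsto.congr (fun ξ => ?_) hslope
    rw [hAφ ξ]
  set M0 : ℂ := ((eta ^ 2 : ℝ) : ℂ) * starRingEnd ℂ nu11 *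
      (2 * ((1:ℝ) : ℂ) + 2 * I * (eta : ℂ) * ((φ 0 : ℝ) : ℂ)) with hM0
  have hMlim : Tendsto Mf (𝓝[>] 0) (𝓝 M0) := by
    rw [hMf, hM0]
    apply Tendsto.mul
    · apply Tendsto.mul _ tendsto_const_nhds
      have : ContinuousAt (fun ξ : ℝ => (((ξ ^ 2 + eta ^ 2 : ℝ)) : ℂ)) 0 :=
        Complex.continuous_ofReal.continuousAt.comp (by fun_prop)
      have h2 := this.tendsto.mono_left (nhdsWithin_le_nhds : 𝓝[>] (0:ℝ) ≤ 𝓝 0)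
      simpa using h2
    · apply Tendsto.add
      · exact tendsto_const_nhds.mul
          ((Complex.continuous_ofReal.tendsto 1).comp hcoshA)
      · exact tendsto_const_nhds.mul
          ((Complex.continuous_ofReal.tendsto (φ 0)).comp hsinhA)
  have hc11 : starRingEnd ℂ nu11 ≠ 0 := by simpa using hnu11
  have hP1C : (((2 * eta ^ 2) ^ (2 * eps) : ℝ) : ℂ)
      = 2 * (((2:ℝ) ^ (2 * eps - 1) : ℝ) : ℂ) * (((eta ^ 2) ^ (2 * eps - 2) : ℝ) : ℂ)
        * (eta : ℂ) ^ 4 := by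
    have h := congrArg (fun r : ℝ => (r : ℂ)) hP1
    push_cast at h ⊢
    exact h
  have hP2C : (((2 * eta ^ 2) ^ (2 * eps - 1) : ℝ) : ℂ)
      = 2 * (((4:ℝ) ^ (eps - 1) : ℝ) : ℂ) * (eta : ℂ) ^ 2
        * (((eta ^ 2) ^ (2 * eps - 2) : ℝ) : ℂ) := by
    have h := congrArg (fun r : ℝ => (r : ℂ)) hP2
    push_cast at h ⊢
    exact h
  have hφ0 : φ 0 = 4 * eta * x + 2 * (2:ℝ) ^ (2 * eps - 1) * eta
      * ((eta ^ 2) ^ (2 * eps - 2)) * t := by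
    simp only [hφ]
    rw [show ((0:ℝ) ^ 2 + eta ^ 2) = eta ^ 2 by norm_num]
  have hM0eq : M0 = 2 * (starRingEnd ℂ nu11 *
      (4 * I * ((eta ^ 4 : ℝ) : ℂ) * (x : ℂ) +
        I * (((2 * eta ^ 2) ^ (2 * eps) : ℝ) : ℂ) * (t : ℂ) + ((eta ^ 2 : ℝ) : ℂ))) := by
    rw [hM0, hφ0]
    push_cast
    linear_combination (starRingEnd ℂ nu11) * (-2 * I * (t:ℂ)) * hP1C
  have hM0ne : M0 ≠ 0 := by
    rw [hM0eq]
    exact mul_ne_zero two_ne_zero (mul_ne_zero hc11 hden)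
  have hNf0 : Nf 0 = 2 * (2 * I * (eta : ℂ) * starRingEnd ℂ nu21 *
      Complex.exp (2 * I * ((eta ^ 2 : ℝ) : ℂ) * (x : ℂ) -
        I * (((2 * eta ^ 2) ^ (2 * eps - 1) : ℝ) : ℂ) * (t : ℂ))) := by
    simp only [hNf]
    have harg : (2:ℂ) * I * ((-((0:ℝ) ^ 2 - eta ^ 2) * x +
        (4:ℝ) ^ (eps - 1) * ((0:ℝ) ^ 2 - eta ^ 2) *
          ((0:ℝ) ^ 2 + eta ^ 2) ^ (2 * eps - 2) * t : ℝ) : ℂ)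
        = 2 * I * ((eta ^ 2 : ℝ) : ℂ) * (x : ℂ) -
          I * (((2 * eta ^ 2) ^ (2 * eps - 1) : ℝ) : ℂ) * (t : ℂ) := by
      rw [show ((0:ℝ) ^ 2 + eta ^ 2) = eta ^ 2 by norm_num]
      push_cast
      linear_combination (I * (t:ℂ)) * hP2C
    rw [harg]
    ring
  have hEv : (fun ξ : ℝ => Nf ξ / Mf ξ) =ᶠ[𝓝[>] (0:ℝ)] (fun xi : ℝ =>
        (2 * I * (xi : ℂ) * (eta : ℂ) * starRingEnd ℂ nu21) /
            (((xi : ℂ) + I * eta) ^ 2 * ((xi : ℂ) - I * eta) * starRingEnd ℂ nu11) *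
          Complex.exp (2 * I *
              ((-(xi ^ 2 - eta ^ 2) * x +
                (4 : ℝ) ^ (eps - 1) * (xi ^ 2 - eta ^ 2) *
                  (xi ^ 2 + eta ^ 2) ^ (2 * eps - 2) * t : ℝ) : ℂ) +
            Complex.log (((xi : ℂ) + I * eta) * (‖nu11‖ : ℝ) /
              ((Real.sqrt (xi ^ 2 + eta ^ 2) : ℝ) * (‖nu21‖ : ℝ)))) *
          (Complex.cosh
            (2 * ((2 * xi * eta * x +
                (2 : ℝ) ^ (2 * eps - 1) * xi * eta *
                  (xi ^ 2 + eta ^ 2) ^ (2 * eps - 2) * t : ℝ) : ℂ) +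
              Complex.log (((xi : ℂ) + I * eta) * (‖nu11‖ : ℝ) /
                ((Real.sqrt (xi ^ 2 + eta ^ 2) : ℝ) * (‖nu21‖ : ℝ)))))⁻¹) := by
    filter_upwards [self_mem_nhdsWithin] with ξ hξ
    exact (key_id eta eps x t heta nu11 nu21 hnu11 hnu21 hmod ξ hξ).symm
  have hT := ((hNlim.div hMlim hM0ne).congr' hEv)
  have hval : Nf 0 / M0 = 2 * I * (eta : ℂ) * starRingEnd ℂ nu21 *
      Complex.exp (2 * I * ((eta ^ 2 : ℝ) : ℂ) * (x : ℂ) -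
        I * (((2 * eta ^ 2) ^ (2 * eps - 1) : ℝ) : ℂ) * (t : ℂ)) /
      (starRingEnd ℂ nu11 *
        (4 * I * ((eta ^ 4 : ℝ) : ℂ) * (x : ℂ) +
          I * (((2 * eta ^ 2) ^ (2 * eps) : ℝ) : ℂ) * (t : ℂ) + ((eta ^ 2 : ℝ) : ℂ))) := by
    rw [hNf0, hM0eq, mul_div_mul_left _ _ (two_ne_zero)]
  exact hval ▸ hT
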